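/- For all integers l ≥ 1 and m ≥ 2, the set of singular points of the projective plane curve {[x:y:z] ∈ ℂℙ² : x·(y·x^l + z^{l+1})^m − z^{(l+1)·m+1} = 0} is exactly {[0:1:0], [1:0:0]}; that is, a point P of ℂℙ² satisfies G_{l,m}(P) = 0 together with the vanishing of all three partial derivatives of G_{l,m} at P (on any homogeneous representative) if and only if P = [0:1:0] or P = [1:0:0]. -/
import Mathlib


open MvPolynomial Projectivization

/-- The polynomial `G_{l,m} = x·(y·x^l + z^{l+1})^m − z^{(l+1)·m + 1}` in `ℂ[x,y,z]`,
with variables `x = X 0`, `y = X 1`, `z = X 2`. -/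
noncomputable def Gpoly (l m : ℕ) : MvPolynomial (Fin 3) ℂ :=
  X 0 * (X 1 * X 0 ^ l + X 2 ^ (l + 1)) ^ m - X 2 ^ ((l + 1) * m + 1)

lemma evalG (l m : ℕ) (v : Fin 3 → ℂ) :
    eval v (Gpoly l m) = v 0 * (v 1 * v 0 ^ l + v 2 ^ (l+1)) ^ m - v 2 ^ ((l+1)*m+1) := by
  simp [Gpoly]

lemma evalG0 (l m : ℕ) (v : Fin 3 → ℂ) :
    eval v (pderiv 0 (Gpoly l m)) =
      (v 1 * v 0 ^ l + v 2 ^ (l+1)) ^ m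
        + (m : ℂ) * l * v 1 * v 0 * v 0 ^ (l-1) * (v 1 * v 0 ^ l + v 2 ^ (l+1)) ^ (m-1) := by
  simp [Gpoly, pderiv_mul, pderiv_pow, pderiv_X_self, pderiv_X_of_ne]
  ring

lemma evalG1 (l m : ℕ) (v : Fin 3 → ℂ) :
    eval v (pderiv 1 (Gpoly l m)) =
      (m : ℂ) * v 0 ^ (l+1) * (v 1 * v 0 ^ l + v 2 ^ (l+1)) ^ (m-1) := by
  simp [Gpoly, pderiv_mul, pderiv_pow, pderiv_X_self, pderiv_X_of_ne]
  ring

lemma evalG2 (l m : ℕ) (v : Fin 3 → ℂ) :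
    eval v (pderiv 2 (Gpoly l m)) =
      (m : ℂ) * (l+1) * v 0 * v 2 ^ l * (v 1 * v 0 ^ l + v 2 ^ (l+1)) ^ (m-1)
        - ((l+1)*m+1 : ℂ) * v 2 ^ ((l+1)*m) := by
  simp [Gpoly, pderiv_mul, pderiv_pow, pderiv_X_self, pderiv_X_of_ne]
  ring

lemma coords (l m : ℕ) (hl : 1 ≤ l) (hm : 2 ≤ m) (a b c : ℂ)
    (H0 : a * (b*a^l + c^(l+1))^m - c^((l+1)*m+1) = 0)
    (H1 : (b*a^l + c^(l+1))^m + (m:ℂ)*l*b*a*a^(l-1)*(b*a^l + c^(l+1))^(m-1) = 0)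
    (H2 : (m:ℂ) * a^(l+1) * (b*a^l + c^(l+1))^(m-1) = 0) :
    c = 0 ∧ (a = 0 ∨ b = 0) := by
  set u : ℂ := b*a^l + c^(l+1) with hu_def
  have hm0 : (m : ℂ) ≠ 0 := Nat.cast_ne_zero.2 (by omega)
  by_cases hu : u = 0
  · have hc : c = 0 := by
      have h := H0
      rw [hu, zero_pow (by omega : m ≠ 0), mul_zero, zero_sub, neg_eq_zero] at h
      exact pow_eq_zero_iff (by omega : (l+1)*m+1 ≠ 0) |>.1 h
    refine ⟨hc, ?_⟩
    have : b * a^l = 0 := by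
      have : b*a^l + c^(l+1) = 0 := hu
      rw [hc, zero_pow (by omega : l+1 ≠ 0), add_zero] at this
      exact this
    rcases mul_eq_zero.1 this with h | h
    · exact Or.inr h
    · exact Or.inl (pow_eq_zero_iff (by omega : l ≠ 0) |>.1 h)
  · exfalso
    have ha : a = 0 := by
      have := H2
      have hupow : u^(m-1) ≠ 0 := pow_ne_zero _ hu
      have : a^(l+1) = 0 := by
        rcases mul_eq_zero.1 this with h | h
        · rcases mul_eq_zero.1 h with h | h
          · exact absurd h hm0
          · exact h
        · exact absurd h hupow
      exact pow_eq_zero_iff (by omega : l+1 ≠ 0) |>.1 this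
    have : u^m = 0 := by
      have := H1
      rw [ha] at this
      simpa using this
    exact hu (pow_eq_zero_iff (by omega : m ≠ 0) |>.1 this)

/-- The set of singular points of the projective plane curve `{G_{l,m} = 0}`
is exactly `{[0:1:0], [1:0:0]}`.  (Vanishing of the homogeneous polynomial `G_{l,m}` and of
its partial derivatives at a point of `ℂℙ²` is tested on the chosen representative `P.rep`;
it is invariant under scaling of the representative.) -/
theorem stmt_5 (l m : ℕ) (hl : 1 ≤ l) (hm : 2 ≤ m) :
    {P : Projectivization ℂ (Fin 3 → ℂ) |
        eval P.rep (Gpoly l m) = 0 ∧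
        eval P.rep (pderiv 0 (Gpoly l m)) = 0 ∧
        eval P.rep (pderiv 1 (Gpoly l m)) = 0 ∧
        eval P.rep (pderiv 2 (Gpoly l m)) = 0} =
      {Projectivization.mk ℂ ![0, 1, 0] (fun h => by simpa using congrFun h 1),
       Projectivization.mk ℂ ![1, 0, 0] (fun h => by simpa using congrFun h 0)} := by
  have hne1 : (![0, 1, 0] : Fin 3 → ℂ) ≠ 0 := fun h => by simpa using congrFun h 1
  have hne0 : (![1, 0, 0] : Fin 3 → ℂ) ≠ 0 := fun h => by simpa using congrFun h 0
  have hl0 : l ≠ 0 := by omega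
  have hl1 : l + 1 ≠ 0 := by omega
  have hm0 : m ≠ 0 := by omega
  have hm1 : m - 1 ≠ 0 := by omega
  have hN : (l+1)*m + 1 ≠ 0 := by omega
  have hN' : (l+1)*m ≠ 0 := by positivity
  ext P
  simp only [Set.mem_setOf_eq, Set.mem_insert_iff, Set.mem_singleton_iff]
  constructor
  · rintro ⟨h0, h1, h2, -⟩
    rw [evalG] at h0; rw [evalG0] at h1; rw [evalG1] at h2
    obtain ⟨hc, hab⟩ := coords l m hl hm _ _ _ h0 h1 h2
    by_cases ha : P.rep 0 = 0
    · left
      have hb : P.rep 1 ≠ 0 := by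
        intro hb
        exact P.rep_nonzero (by funext i; fin_cases i <;> simp [ha, hb, hc])
      refine (Projectivization.mk_rep P).symm.trans
        ((Projectivization.mk_eq_mk_iff ℂ _ _ P.rep_nonzero hne1).2
          ⟨Units.mk0 _ hb, ?_⟩)
      funext i; fin_cases i <;> simp [Units.smul_def, ha, hc]
    · right
      have hb : P.rep 1 = 0 := hab.resolve_left ha
      refine (Projectivization.mk_rep P).symm.trans
        ((Projectivization.mk_eq_mk_iff ℂ _ _ P.rep_nonzero hne0).2
          ⟨Units.mk0 _ ha, ?_⟩)
      funext i; fin_cases i <;> simp [Units.smul_def, hb, hc]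
  · rintro (hP | hP)
    · obtain ⟨t, ht⟩ := Projectivization.exists_smul_eq_mk_rep ℂ _ hne1
      rw [← hP] at ht
      have e0 : P.rep 0 = 0 := by rw [← ht]; simp [Units.smul_def]
      have e2 : P.rep 2 = 0 := by rw [← ht]; simp [Units.smul_def]
      refine ⟨?_, ?_, ?_, ?_⟩
      · rw [evalG]; simp [e0, e2, zero_pow hl0, zero_pow hl1, zero_pow hm0, zero_pow hN]
      · rw [evalG0]; simp [e0, e2, zero_pow hl0, zero_pow hl1, zero_pow hm0]
      · rw [evalG1]; simp [e0, e2, zero_pow hl1]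
      · rw [evalG2]; simp [e0, e2, zero_pow hl0, zero_pow hN']
    · obtain ⟨t, ht⟩ := Projectivization.exists_smul_eq_mk_rep ℂ _ hne0
      rw [← hP] at ht
      have e1 : P.rep 1 = 0 := by rw [← ht]; simp [Units.smul_def]
      have e2 : P.rep 2 = 0 := by rw [← ht]; simp [Units.smul_def]
      refine ⟨?_, ?_, ?_, ?_⟩
      · rw [evalG]; simp [e1, e2, zero_pow hl1, zero_pow hm0, zero_pow hN]
      · rw [evalG0]; simp [e1, e2, zero_pow hl1, zero_pow hm0]
      · rw [evalG1]; simp [e1, e2, zero_pow hl1, zero_pow hm1]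
      · rw [evalG2]; simp [e1, e2, zero_pow hl0, zero_pow hl1, zero_pow hm1, zero_pow hN']
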